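/- Let M = (A, B, E) be a MINREP instance and let H be the hypergraph constructed from it as described. Then the minimum core size of H equals the minimum cardinality of a MINREP solution of M, i.e., the minimum of |A' ∪ B'| over A' ⊆ A, B' ⊆ B such that every super-edge A_iB_j ∈ ℰ is covered by some ab ∈ E with a ∈ A', b ∈ B'. -/

import Mathlib

variable {α : Type*} [DecidableEq α]

/-- `Assim E C v` : vertex `v` eventually gets assimilated when the propagation
process of Definition 3 (core) is run from the initial set `C` on the edge family `E`:
`v` is assimilated if it lies in `C`, or if it lies in some edge `e ∈ E`
all of whose other vertices are assimilated (i.e. `|e ∩ assimilated| = |e| - 1`,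
so `e` can extend the assimilated set by `v`). -/
inductive Assim (E : Finset (Finset α)) (C : Finset α) : α → Prop
  | base (v : α) : v ∈ C → Assim E C v
  | step (e : Finset α) (v : α) : e ∈ E → v ∈ e →
      (∀ w ∈ e, w ≠ v → Assim E C w) → Assim E C v

/-- `C` is a core of the hypergraph `(V, E)`: the propagation process started from `C`
terminates with every edge removed (covered), i.e. every vertex of every edge is
eventually assimilated. -/
def IsCore (V : Finset α) (E : Finset (Finset α)) (C : Finset α) : Prop :=
  C ⊆ V ∧ ∀ e ∈ E, ∀ v ∈ e, Assim E C v

/-- The minimum core size of the hypergraph `(V, E)`. -/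
noncomputable def minCoreSize (V : Finset α) (E : Finset (Finset α)) : ℕ :=
  sInf {k | ∃ C, IsCore V E C ∧ C.card = k}

/-- The vertex set `V_i = C ∪ ⋃_{j=1}^{i} ⋃_{e ∈ L j} e` determined by a core `C`
and layers `L`. -/
def layerVerts (C : Finset α) (L : ℕ → Finset (Finset α)) (i : ℕ) : Finset α :=
  C ∪ (Finset.Icc 1 i).biUnion fun j => (L j).biUnion id

/-- `L 1, …, L r` is a partition of `E` into layers witnessing radius `r` for the
core `C`: the layers are disjoint, their union is `E`, and every edge `e` in
layer `i` satisfies `|e ∩ V_{i-1}| = |e| - 1`. -/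
def IsLayering (E : Finset (Finset α)) (C : Finset α)
    (L : ℕ → Finset (Finset α)) (r : ℕ) : Prop :=
  (∀ i ∈ Finset.Icc 1 r, L i ⊆ E) ∧
  (∀ i ∈ Finset.Icc 1 r, ∀ j ∈ Finset.Icc 1 r, i ≠ j → Disjoint (L i) (L j)) ∧
  (Finset.Icc 1 r).biUnion L = E ∧
  ∀ i ∈ Finset.Icc 1 r, ∀ e ∈ L i, (e ∩ layerVerts C L (i - 1)).card = e.card - 1

/-- The radius of a core `C` : the minimum `r` such that `E` can be partitioned
into `r` layers as in the definition of the radius. -/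
noncomputable def coreRadius (E : Finset (Finset α)) (C : Finset α) : ℕ :=
  sInf {r | ∃ L, IsLayering E C L r}


section MINREP

/-- Vertex type for the MINREP reduction: original graph vertices, super-edge vertices
(two copies, tagged by a `Bool`), inner nodes of first-layer AND-gadgets (indexed by a
graph edge `(a, b)`, a copy tag `k` and which of the two inner nodes `w`), and inner
nodes of second-layer AND-gadgets (indexed by an output vertex `v` and which of the two
inner nodes `w`). -/
abbrev MRVert (α : Type*) :=
  α ⊕ ((Finset α × Finset α × Bool) ⊕ ((α × α × Bool × Bool) ⊕ (α × Bool)))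

instance : DecidableEq (MRVert α) :=
  @instDecidableEqSum _ _ inferInstance
    (@instDecidableEqSum _ _ inferInstance (@instDecidableEqSum _ _ inferInstance inferInstance))

/-- a vertex of `A ∪ B` -/
def mV (a : α) : MRVert α := Sum.inl a
/-- the copy in `ℰ_k` of the super-edge `A_i B_j` -/
def mE (Ai Bj : Finset α) (k : Bool) : MRVert α := Sum.inr (Sum.inl (Ai, Bj, k))
/-- inner node `w` of the first-layer gadget `AND({a, b}, e_k)` -/
def mX1 (a b : α) (k w : Bool) : MRVert α := Sum.inr (Sum.inr (Sum.inl (a, b, k, w)))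
/-- inner node `w` of the second-layer gadget `AND(ℰ_1 ∪ ℰ_2, v)` -/
def mX2 (v : α) (w : Bool) : MRVert α := Sum.inr (Sum.inr (Sum.inr (v, w)))

/-- The super-edges `ℰ`: pairs `(A_i, B_j)` such that some `ab ∈ E` has
`a ∈ A_i` and `b ∈ B_j`. -/
def superEdges (PA PB : Finset (Finset α)) (Eg : Finset (α × α)) :
    Finset (Finset α × Finset α) :=
  (PA ×ˢ PB).filter fun p => ∃ q ∈ Eg, q.1 ∈ p.1 ∧ q.2 ∈ p.2

/-- The vertices `ℰ_1 ∪ ℰ_2`: both copies of every super-edge. -/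
def eeVerts (PA PB : Finset (Finset α)) (Eg : Finset (α × α)) : Finset (MRVert α) :=
  (superEdges PA PB Eg).biUnion fun p =>
    {mE p.1 p.2 false, mE p.1 p.2 true}

/-- The edges of the first-layer gadgets `AND({a, b}, e_k)` for every super-edge
`A_i B_j`, every `ab ∈ E` with `a ∈ A_i, b ∈ B_j`, and `k ∈ {1, 2}`. -/
def firstLayerEdges (PA PB : Finset (Finset α)) (Eg : Finset (α × α)) :
    Finset (Finset (MRVert α)) :=
  (superEdges PA PB Eg).biUnion fun p =>
    (Eg.filter fun q => q.1 ∈ p.1 ∧ q.2 ∈ p.2).biUnion fun q =>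
      ({false, true} : Finset Bool).biUnion fun k =>
        {{mV q.1, mV q.2, mX1 q.1 q.2 k false},
         {mV q.1, mV q.2, mX1 q.1 q.2 k true},
         {mX1 q.1 q.2 k false, mX1 q.1 q.2 k true, mE p.1 p.2 k}}

/-- The edges of the second-layer gadgets `AND(ℰ_1 ∪ ℰ_2, v)` for every `v ∈ A ∪ B`. -/
def secondLayerEdges (A B : Finset α) (PA PB : Finset (Finset α))
    (Eg : Finset (α × α)) : Finset (Finset (MRVert α)) :=
  (A ∪ B).biUnion fun v =>
    {insert (mX2 v false) (eeVerts PA PB Eg),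
     insert (mX2 v true) (eeVerts PA PB Eg),
     {mX2 v false, mX2 v true, mV v}}

/-- The edge set of the constructed hypergraph `H`. -/
def mrEdges (A B : Finset α) (PA PB : Finset (Finset α)) (Eg : Finset (α × α)) :
    Finset (Finset (MRVert α)) :=
  firstLayerEdges PA PB Eg ∪ secondLayerEdges A B PA PB Eg

/-- The vertex set of the constructed hypergraph `H`:
`V_0 = A ∪ B ∪ ℰ_1 ∪ ℰ_2` together with the gadget inner nodes `V_1`. -/
def mrVerts (A B : Finset α) (PA PB : Finset (Finset α)) (Eg : Finset (α × α)) :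
    Finset (MRVert α) :=
  (A ∪ B).image mV ∪ eeVerts PA PB Eg ∪
    (firstLayerEdges PA PB Eg).biUnion id ∪ (secondLayerEdges A B PA PB Eg).biUnion id


namespace MinrepAux

section AssimN

variable (E : Finset (Finset α)) (C : Finset α)

def AssimN : ℕ → α → Prop
  | 0, v => v ∈ C
  | (n+1), v => AssimN n v ∨ ∃ e ∈ E, v ∈ e ∧ ∀ w ∈ e, w ≠ v → AssimN n w

variable {E C}

lemma assimN_succ_of {n : ℕ} {v : α} (h : AssimN E C n v) : AssimN E C (n+1) v :=
  Or.inl h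

lemma assimN_mono : ∀ {m n : ℕ}, m ≤ n → ∀ {v : α}, AssimN E C m v → AssimN E C n v := by
  intro m n hmn
  induction n with
  | zero => intro v h; simpa [Nat.le_zero.mp hmn] using h
  | succ n ih =>
    intro v h
    rcases Nat.lt_or_ge m (n+1) with h1 | h1
    · exact Or.inl (ih (Nat.lt_succ_iff.mp h1) h)
    · have : m = n + 1 := le_antisymm hmn h1
      subst this; exact h

lemma assimN_assim : ∀ (n : ℕ) (v : α), AssimN E C n v → Assim E C v := by
  intro n
  induction n with
  | zero => intro v h; exact Assim.base v h
  | succ n ih =>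
    intro v h
    rcases h with h | ⟨e, he, hv, hw⟩
    · exact ih v h
    · exact Assim.step e v he hv (fun w hwe hne => ih w (hw w hwe hne))

variable (E C) in
noncomputable def hgt (v : α) : ℕ := sInf {n | AssimN E C n v}

lemma hgt_le {v : α} {n : ℕ} (h : AssimN E C n v) : hgt E C v ≤ n :=
  Nat.sInf_le h

lemma assimN_hgt {v : α} (h : ∃ n, AssimN E C n v) : AssimN E C (hgt E C v) v :=
  Nat.sInf_mem h

lemma assim_exists {v : α} (h : Assim E C v) : ∃ n, AssimN E C n v := by
  induction h with
  | base v hv => exact ⟨0, hv⟩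
  | step e v he hv hw ih =>
    refine ⟨(e.sup (hgt E C)) + 1, Or.inr ⟨e, he, hv, fun w hwe hne => ?_⟩⟩
    have h1 : AssimN E C (hgt E C w) w := assimN_hgt (ih w hwe hne)
    exact assimN_mono (Finset.le_sup hwe) h1

lemma hgt_pos_inv {v : α} (h : AssimN E C (hgt E C v) v) (hne : v ∉ C) :
    ∃ e ∈ E, v ∈ e ∧ ∀ w ∈ e, w ≠ v → AssimN E C (hgt E C v - 1) w := by
  cases hn : hgt E C v with
  | zero => rw [hn] at h; exact absurd h hne
  | succ m =>
    rw [hn] at h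
    rcases h with h | h
    · exact absurd (hgt_le h) (by omega)
    · simpa [hn] using h

end AssimN

end MinrepAux

set_option linter.unusedSectionVars false

namespace MinrepAux2

@[simp] lemma mV_eq {a b : α} : mV a = mV b ↔ a = b := by simp [mV]
@[simp] lemma mE_eq {x y x' y' : Finset α} {k k' : Bool} :
    mE x y k = mE x' y' k' ↔ x = x' ∧ y = y' ∧ k = k' := by simp [mE]
@[simp] lemma mX1_eq {a b a' b' : α} {k w k' w' : Bool} :
    mX1 a b k w = mX1 a' b' k' w' ↔ a = a' ∧ b = b' ∧ k = k' ∧ w = w' := by simp [mX1]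
@[simp] lemma mX2_eq {v v' : α} {w w' : Bool} :
    mX2 v w = mX2 v' w' ↔ v = v' ∧ w = w' := by simp [mX2]
@[simp] lemma mV_ne_mE {a : α} {x y k} : mV a ≠ mE x y k := by simp [mV, mE]
@[simp] lemma mV_ne_mX1 {v a b : α} {k w} : mV v ≠ mX1 a b k w := by simp [mV, mX1]
@[simp] lemma mV_ne_mX2 {v a : α} {w} : mV v ≠ mX2 a w := by simp [mV, mX2]
@[simp] lemma mE_ne_mV {a : α} {x y k} : mE x y k ≠ mV a := by simp [mV, mE]
@[simp] lemma mE_ne_mX1 {x y k} {a b : α} {k' w} : mE x y k ≠ mX1 a b k' w := by simp [mE, mX1]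
@[simp] lemma mE_ne_mX2 {x y k} {a : α} {w} : mE x y k ≠ mX2 a w := by simp [mE, mX2]
@[simp] lemma mX1_ne_mV {v a b : α} {k w} : mX1 a b k w ≠ mV v := by simp [mV, mX1]
@[simp] lemma mX1_ne_mE {x y k'} {a b : α} {k w} : mX1 a b k w ≠ mE x y k' := by simp [mE, mX1]
@[simp] lemma mX1_ne_mX2 {a b v : α} {k w w'} : mX1 a b k w ≠ mX2 v w' := by simp [mX1, mX2]
@[simp] lemma mX2_ne_mV {v a : α} {w} : mX2 a w ≠ mV v := by simp [mV, mX2]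
@[simp] lemma mX2_ne_mE {x y k} {a : α} {w} : mX2 a w ≠ mE x y k := by simp [mE, mX2]
@[simp] lemma mX2_ne_mX1 {a b v : α} {k w w'} : mX2 v w' ≠ mX1 a b k w := by simp [mX1, mX2]

section Edges

variable (A B : Finset α) (PA PB : Finset (Finset α)) (Eg : Finset (α × α))

lemma mem_superEdges {p : Finset α × Finset α} :
    p ∈ superEdges PA PB Eg ↔
      p.1 ∈ PA ∧ p.2 ∈ PB ∧ ∃ q ∈ Eg, q.1 ∈ p.1 ∧ q.2 ∈ p.2 := by
  simp [superEdges, Finset.mem_filter, Finset.mem_product, and_assoc]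

lemma mem_eeVerts {x : MRVert α} :
    x ∈ eeVerts PA PB Eg ↔ ∃ p ∈ superEdges PA PB Eg, ∃ k, x = mE p.1 p.2 k := by
  simp only [eeVerts, Finset.mem_biUnion, Finset.mem_insert, Finset.mem_singleton]
  constructor
  · rintro ⟨p, hp, h | h⟩
    · exact ⟨p, hp, false, h⟩
    · exact ⟨p, hp, true, h⟩
  · rintro ⟨p, hp, k, hk⟩
    exact ⟨p, hp, by cases k <;> simp [hk]⟩

lemma mX2_not_mem_eeVerts {v : α} {w : Bool} : mX2 v w ∉ eeVerts PA PB Eg := by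
  rw [mem_eeVerts]; rintro ⟨p, hp, k, hk⟩; simp at hk

lemma fl1_mem {p : Finset α × Finset α} {q : α × α}
    (hp : p ∈ superEdges PA PB Eg) (hq : q ∈ Eg) (h1 : q.1 ∈ p.1) (h2 : q.2 ∈ p.2)
    (k w : Bool) :
    ({mV q.1, mV q.2, mX1 q.1 q.2 k w} : Finset (MRVert α)) ∈ mrEdges A B PA PB Eg := by
  rw [mrEdges, Finset.mem_union]
  left
  rw [firstLayerEdges]
  simp only [Finset.mem_biUnion, Finset.mem_filter, Finset.mem_insert, Finset.mem_singleton]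
  exact ⟨p, hp, q, ⟨hq, h1, h2⟩, k, by simp, by cases w <;> simp⟩

lemma fl3_mem {p : Finset α × Finset α} {q : α × α}
    (hp : p ∈ superEdges PA PB Eg) (hq : q ∈ Eg) (h1 : q.1 ∈ p.1) (h2 : q.2 ∈ p.2)
    (k : Bool) :
    ({mX1 q.1 q.2 k false, mX1 q.1 q.2 k true, mE p.1 p.2 k} : Finset (MRVert α)) ∈
      mrEdges A B PA PB Eg := by
  rw [mrEdges, Finset.mem_union]
  left
  rw [firstLayerEdges]
  simp only [Finset.mem_biUnion, Finset.mem_filter, Finset.mem_insert, Finset.mem_singleton]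
  exact ⟨p, hp, q, ⟨hq, h1, h2⟩, k, by simp, by simp⟩

lemma slBig_mem {v : α} (hv : v ∈ A ∪ B) (w : Bool) :
    insert (mX2 v w) (eeVerts PA PB Eg) ∈ mrEdges A B PA PB Eg := by
  rw [mrEdges, Finset.mem_union]
  right
  rw [secondLayerEdges]
  simp only [Finset.mem_biUnion, Finset.mem_insert, Finset.mem_singleton]
  exact ⟨v, hv, by cases w <;> simp⟩

lemma slSmall_mem {v : α} (hv : v ∈ A ∪ B) :
    ({mX2 v false, mX2 v true, mV v} : Finset (MRVert α)) ∈ mrEdges A B PA PB Eg := by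
  rw [mrEdges, Finset.mem_union]
  right
  rw [secondLayerEdges]
  simp only [Finset.mem_biUnion, Finset.mem_insert, Finset.mem_singleton]
  exact ⟨v, hv, by simp⟩

lemma mrEdges_cases {e : Finset (MRVert α)} (he : e ∈ mrEdges A B PA PB Eg) :
    (∃ p ∈ superEdges PA PB Eg, ∃ q ∈ Eg, q.1 ∈ p.1 ∧ q.2 ∈ p.2 ∧ ∃ k : Bool,
       e = {mV q.1, mV q.2, mX1 q.1 q.2 k false} ∨
       e = {mV q.1, mV q.2, mX1 q.1 q.2 k true} ∨
       e = {mX1 q.1 q.2 k false, mX1 q.1 q.2 k true, mE p.1 p.2 k}) ∨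
    (∃ v ∈ A ∪ B, (∃ w : Bool, e = insert (mX2 v w) (eeVerts PA PB Eg)) ∨
       e = {mX2 v false, mX2 v true, mV v}) := by
  rw [mrEdges, Finset.mem_union] at he
  rcases he with he | he
  · left
    rw [firstLayerEdges] at he
    simp only [Finset.mem_biUnion, Finset.mem_filter, Finset.mem_insert,
      Finset.mem_singleton] at he
    obtain ⟨p, hp, q, ⟨hq, h1, h2⟩, k, hk, hcase⟩ := he
    exact ⟨p, hp, q, hq, h1, h2, k, hcase⟩
  · right
    rw [secondLayerEdges] at he
    simp only [Finset.mem_biUnion, Finset.mem_insert, Finset.mem_singleton] at he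
    obtain ⟨v, hv, hcase⟩ := he
    refine ⟨v, hv, ?_⟩
    rcases hcase with h | h | h
    · exact Or.inl ⟨false, h⟩
    · exact Or.inl ⟨true, h⟩
    · exact Or.inr h

end Edges

end MinrepAux2

namespace MinrepAux3
open MinrepAux MinrepAux2

section Inv

variable {A B : Finset α} {PA PB : Finset (Finset α)} {Eg : Finset (α × α)}

lemma edges_mX2 {e : Finset (MRVert α)} {v : α} {w : Bool}
    (he : e ∈ mrEdges A B PA PB Eg) (hx : mX2 v w ∈ e) :
    v ∈ A ∪ B ∧ (e = insert (mX2 v w) (eeVerts PA PB Eg) ∨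
      e = {mX2 v false, mX2 v true, mV v}) := by
  rcases mrEdges_cases A B PA PB Eg he with
    ⟨p, hp, q, hq, h1, h2, k, h | h | h⟩ | ⟨u, hu, ⟨w', h⟩ | h⟩ <;> subst h <;>
    simp only [Finset.mem_insert, Finset.mem_singleton] at hx
  · simp at hx
  · simp at hx
  · simp at hx
  · rcases hx with hx | hx
    · simp only [mX2_eq] at hx
      obtain ⟨rfl, rfl⟩ := hx
      exact ⟨hu, Or.inl rfl⟩
    · exact absurd hx (mX2_not_mem_eeVerts PA PB Eg)
  · have : v = u := by
      rcases hx with hx | hx | hx <;> simp at hx <;> tauto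
    subst this
    exact ⟨hu, Or.inr rfl⟩

lemma edges_mV {e : Finset (MRVert α)} {v : α}
    (he : e ∈ mrEdges A B PA PB Eg) (hx : mV v ∈ e) :
    (∃ p ∈ superEdges PA PB Eg, ∃ q ∈ Eg, q.1 ∈ p.1 ∧ q.2 ∈ p.2 ∧ (v = q.1 ∨ v = q.2) ∧
      ∃ k w : Bool, e = {mV q.1, mV q.2, mX1 q.1 q.2 k w}) ∨
    (v ∈ A ∪ B ∧ e = {mX2 v false, mX2 v true, mV v}) := by
  rcases mrEdges_cases A B PA PB Eg he with
    ⟨p, hp, q, hq, h1, h2, k, h | h | h⟩ | ⟨u, hu, ⟨w', h⟩ | h⟩ <;> subst h <;>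
    simp only [Finset.mem_insert, Finset.mem_singleton] at hx
  · refine Or.inl ⟨p, hp, q, hq, h1, h2, ?_, k, false, rfl⟩
    rcases hx with hx | hx | hx <;> simp at hx <;> tauto
  · refine Or.inl ⟨p, hp, q, hq, h1, h2, ?_, k, true, rfl⟩
    rcases hx with hx | hx | hx <;> simp at hx <;> tauto
  · exfalso; rcases hx with hx | hx | hx <;> simp at hx
  · exfalso
    rcases hx with hx | hx
    · simp at hx
    · rw [mem_eeVerts] at hx; obtain ⟨p, hp, k, hk⟩ := hx; simp at hk
  · have : v = u := by
      rcases hx with hx | hx | hx <;> simp at hx <;> tauto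
    subst this
    exact Or.inr ⟨hu, rfl⟩

lemma edges_mX1 {e : Finset (MRVert α)} {a b : α} {k w : Bool}
    (he : e ∈ mrEdges A B PA PB Eg) (hx : mX1 a b k w ∈ e) :
    ((a, b) ∈ Eg ∧ (∃ p ∈ superEdges PA PB Eg, a ∈ p.1 ∧ b ∈ p.2) ∧
      e = {mV a, mV b, mX1 a b k w}) ∨
    ((a, b) ∈ Eg ∧ ∃ p ∈ superEdges PA PB Eg, a ∈ p.1 ∧ b ∈ p.2 ∧
      e = {mX1 a b k false, mX1 a b k true, mE p.1 p.2 k}) := by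
  rcases mrEdges_cases A B PA PB Eg he with
    ⟨p, hp, q, hq, h1, h2, k', h | h | h⟩ | ⟨u, hu, ⟨w', h⟩ | h⟩ <;> subst h <;>
    simp only [Finset.mem_insert, Finset.mem_singleton] at hx
  · have : q.1 = a ∧ q.2 = b ∧ k' = k ∧ false = w := by
      rcases hx with hx | hx | hx <;> simp at hx <;> tauto
    obtain ⟨rfl, rfl, rfl, rfl⟩ := this
    exact Or.inl ⟨by simpa using hq, ⟨p, hp, h1, h2⟩, rfl⟩
  · have : q.1 = a ∧ q.2 = b ∧ k' = k ∧ true = w := by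
      rcases hx with hx | hx | hx <;> simp at hx <;> tauto
    obtain ⟨rfl, rfl, rfl, rfl⟩ := this
    exact Or.inl ⟨by simpa using hq, ⟨p, hp, h1, h2⟩, rfl⟩
  · have : q.1 = a ∧ q.2 = b ∧ k' = k := by
      rcases hx with hx | hx | hx <;> simp at hx <;> tauto
    obtain ⟨rfl, rfl, rfl⟩ := this
    exact Or.inr ⟨by simpa using hq, p, hp, h1, h2, rfl⟩
  · exfalso
    rcases hx with hx | hx
    · simp at hx
    · rw [mem_eeVerts] at hx; obtain ⟨p, hp, kk, hk⟩ := hx; simp at hk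
  · exfalso; rcases hx with hx | hx | hx <;> simp at hx

lemma edges_mE {e : Finset (MRVert α)} {P : Finset α × Finset α} {k : Bool}
    (he : e ∈ mrEdges A B PA PB Eg) (hx : mE P.1 P.2 k ∈ e) :
    (P ∈ superEdges PA PB Eg ∧ ∃ q ∈ Eg, q.1 ∈ P.1 ∧ q.2 ∈ P.2 ∧
      e = {mX1 q.1 q.2 k false, mX1 q.1 q.2 k true, mE P.1 P.2 k}) ∨
    (∃ v ∈ A ∪ B, ∃ w : Bool, e = insert (mX2 v w) (eeVerts PA PB Eg)) := by
  rcases mrEdges_cases A B PA PB Eg he with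
    ⟨p, hp, q, hq, h1, h2, k', h | h | h⟩ | ⟨u, hu, ⟨w', h⟩ | h⟩ <;> subst h <;>
    simp only [Finset.mem_insert, Finset.mem_singleton] at hx
  · exfalso; rcases hx with hx | hx | hx <;> simp at hx
  · exfalso; rcases hx with hx | hx | hx <;> simp at hx
  · have : p.1 = P.1 ∧ p.2 = P.2 ∧ k' = k := by
      rcases hx with hx | hx | hx <;> simp at hx <;> tauto
    obtain ⟨e1, e2, rfl⟩ := this
    have : p = P := Prod.ext e1 e2
    subst this
    exact Or.inl ⟨hp, q, hq, h1, h2, by rw [e1, e2]⟩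
  · exact Or.inr ⟨u, hu, w', rfl⟩
  · exfalso; rcases hx with hx | hx | hx <;> simp at hx

end Inv

end MinrepAux3

namespace MinrepAux4
open MinrepAux MinrepAux2 MinrepAux3

lemma mV_injective : Function.Injective (mV : α → MRVert α) := by
  intro a b h; simpa using h

section Easy

variable {A B : Finset α} {PA PB : Finset (Finset α)} {Eg : Finset (α × α)}
  (hEg : ∀ q ∈ Eg, q.1 ∈ A ∧ q.2 ∈ B)
  {A' B' : Finset α} (hA' : A' ⊆ A) (hB' : B' ⊆ B)
  (hcov : ∀ p ∈ superEdges PA PB Eg,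
    ∃ q ∈ Eg, q.1 ∈ A' ∧ q.1 ∈ p.1 ∧ q.2 ∈ B' ∧ q.2 ∈ p.2)

include hEg hA' hB' hcov in
lemma sol_isCore :
    IsCore (mrVerts A B PA PB Eg) (mrEdges A B PA PB Eg) ((A' ∪ B').image mV) := by
  set E := mrEdges A B PA PB Eg with hE
  set C := (A' ∪ B').image mV with hC
  have h0 : ∀ v ∈ A' ∪ B', Assim E C (mV v) := fun v hv =>
    Assim.base _ (Finset.mem_image_of_mem mV hv)
  have hE2 : ∀ p ∈ superEdges PA PB Eg, ∀ k : Bool, Assim E C (mE p.1 p.2 k) := by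
    intro p hp k
    obtain ⟨q, hq, hq1, h1, hq2, h2⟩ := hcov p hp
    have ha : Assim E C (mV q.1) := h0 q.1 (Finset.mem_union_left _ hq1)
    have hb : Assim E C (mV q.2) := h0 q.2 (Finset.mem_union_right _ hq2)
    have hX1 : ∀ w : Bool, Assim E C (mX1 q.1 q.2 k w) := by
      intro w
      refine Assim.step _ _ (fl1_mem A B PA PB Eg hp hq h1 h2 k w) (by simp) ?_
      intro x hx hne
      simp only [Finset.mem_insert, Finset.mem_singleton] at hx
      rcases hx with rfl | rfl | rfl
      · exact ha
      · exact hb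
      · exact absurd rfl hne
    refine Assim.step _ _ (fl3_mem A B PA PB Eg hp hq h1 h2 k) (by simp) ?_
    intro x hx hne
    simp only [Finset.mem_insert, Finset.mem_singleton] at hx
    rcases hx with rfl | rfl | rfl
    · exact hX1 false
    · exact hX1 true
    · exact absurd rfl hne
  have hEE : ∀ u ∈ eeVerts PA PB Eg, Assim E C u := by
    intro u hu
    rw [mem_eeVerts] at hu
    obtain ⟨p, hp, k, rfl⟩ := hu
    exact hE2 p hp k
  have hX2 : ∀ v ∈ A ∪ B, ∀ w : Bool, Assim E C (mX2 v w) := by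
    intro v hv w
    refine Assim.step _ _ (slBig_mem A B PA PB Eg hv w) (Finset.mem_insert_self _ _) ?_
    intro x hx hne
    rcases Finset.mem_insert.mp hx with rfl | hx
    · exact absurd rfl hne
    · exact hEE x hx
  have hV : ∀ v ∈ A ∪ B, Assim E C (mV v) := by
    intro v hv
    refine Assim.step _ _ (slSmall_mem A B PA PB Eg hv) (by simp) ?_
    intro x hx hne
    simp only [Finset.mem_insert, Finset.mem_singleton] at hx
    rcases hx with rfl | rfl | rfl
    · exact hX2 v hv false
    · exact hX2 v hv true
    · exact absurd rfl hne
  have hX1' : ∀ q ∈ Eg, ∀ (p : Finset α × Finset α), p ∈ superEdges PA PB Eg →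
      q.1 ∈ p.1 → q.2 ∈ p.2 → ∀ k w : Bool, Assim E C (mX1 q.1 q.2 k w) := by
    intro q hq p hp h1 h2 k w
    refine Assim.step _ _ (fl1_mem A B PA PB Eg hp hq h1 h2 k w) (by simp) ?_
    intro x hx hne
    simp only [Finset.mem_insert, Finset.mem_singleton] at hx
    rcases hx with rfl | rfl | rfl
    · exact hV q.1 (Finset.mem_union_left _ (hEg q hq).1)
    · exact hV q.2 (Finset.mem_union_right _ (hEg q hq).2)
    · exact absurd rfl hne
  constructor
  · intro x hx
    rw [hC] at hx
    obtain ⟨v, hv, rfl⟩ := Finset.mem_image.mp hx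
    have : v ∈ A ∪ B := Finset.union_subset_union hA' hB' hv
    rw [mrVerts]
    exact Finset.mem_union_left _ (Finset.mem_union_left _ (Finset.mem_union_left _
      (Finset.mem_image_of_mem mV this)))
  · intro e he x hx
    rcases mrEdges_cases A B PA PB Eg he with
      ⟨p, hp, q, hq, h1, h2, k, h | h | h⟩ | ⟨u, hu, ⟨w', h⟩ | h⟩ <;> subst h <;>
      simp only [Finset.mem_insert, Finset.mem_singleton] at hx
    · rcases hx with rfl | rfl | rfl
      · exact hV q.1 (Finset.mem_union_left _ (hEg q hq).1)
      · exact hV q.2 (Finset.mem_union_right _ (hEg q hq).2)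
      · exact hX1' q hq p hp h1 h2 k false
    · rcases hx with rfl | rfl | rfl
      · exact hV q.1 (Finset.mem_union_left _ (hEg q hq).1)
      · exact hV q.2 (Finset.mem_union_right _ (hEg q hq).2)
      · exact hX1' q hq p hp h1 h2 k true
    · rcases hx with rfl | rfl | rfl
      · exact hX1' q hq p hp h1 h2 k false
      · exact hX1' q hq p hp h1 h2 k true
      · exact hE2 p hp k
    · rcases hx with rfl | hx
      · exact hX2 u hu w'
      · exact hEE x hx
    · rcases hx with rfl | rfl | rfl
      · exact hX2 u hu false
      · exact hX2 u hu true
      · exact hV u hu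

end Easy

end MinrepAux4

namespace MinrepAux5
open MinrepAux MinrepAux2 MinrepAux3

/-- `v ∈ A ∪ B` is assimilated strictly before level `nstar`. -/
def EarlyV (A B : Finset α) (PA PB : Finset (Finset α)) (Eg : Finset (α × α))
    (C : Finset (MRVert α)) (nstar : ℕ) (v : α) : Prop :=
  mV v ∈ C ∨ ∃ m < nstar, AssimN (mrEdges A B PA PB Eg) C m (mV v)

section Hard

variable {A B : Finset α} {PA PB : Finset (Finset α)} {Eg : Finset (α × α)}
  {C : Finset (MRVert α)} {nstar : ℕ} {ustar : MRVert α}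
  (hustar_ee : ustar ∈ eeVerts PA PB Eg)
  (hustar_not : ∀ m < nstar, ¬ AssimN (mrEdges A B PA PB Eg) C m ustar)

include hustar_ee hustar_not in
/-- Inversion for `mX2` vertices at low levels. -/
lemma X2low : ∀ n ≤ nstar, ∀ (v : α) (w : Bool),
    AssimN (mrEdges A B PA PB Eg) C n (mX2 v w) →
    (∃ w', mX2 v w' ∈ C) ∧
      (mX2 v w ∈ C ∨ ∃ m < n, AssimN (mrEdges A B PA PB Eg) C m (mV v)) := by
  intro n
  induction n using Nat.strong_induction_on with
  | _ n ih =>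
    intro hn v w h
    match n, h with
    | 0, h => exact ⟨⟨w, h⟩, Or.inl h⟩
    | (n+1), Or.inl h => 
      obtain ⟨h1, h2⟩ := ih n (Nat.lt_succ_self n) (le_trans (Nat.le_succ n) hn) v w h
      refine ⟨h1, ?_⟩
      rcases h2 with h2 | ⟨m, hm, h2⟩
      · exact Or.inl h2
      · exact Or.inr ⟨m, lt_trans hm (Nat.lt_succ_self n), h2⟩
    | (n+1), Or.inr ⟨e, he, hxe, hall⟩ =>
      rcases (edges_mX2 he hxe).2 with h | h
      · exfalso
        subst h
        have hne : ustar ≠ mX2 v w := by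
          rw [mem_eeVerts] at hustar_ee
          obtain ⟨p, hp, k, hk⟩ := hustar_ee
          rw [hk]; simp
        have := hall ustar (Finset.mem_insert_of_mem hustar_ee) hne
        exact hustar_not n (lt_of_lt_of_le (Nat.lt_succ_self n) hn) this
      · subst h
        have hV : AssimN (mrEdges A B PA PB Eg) C n (mV v) := by
          refine hall (mV v) (by simp) (by simp)
        have hX2' : AssimN (mrEdges A B PA PB Eg) C n (mX2 v (!w)) := by
          refine hall (mX2 v (!w)) (by cases w <;> simp) (by cases w <;> simp)
        obtain ⟨h1, _⟩ := ih n (Nat.lt_succ_self n) (le_trans (Nat.le_succ n) hn) v (!w) hX2'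
        exact ⟨h1, Or.inr ⟨n, Nat.lt_succ_self n, hV⟩⟩

/-- Inversion for `mX1` vertices at low levels: either some inner node of the pair
is in the core, or both endpoint vertices were assimilated earlier. -/
lemma X1pair : ∀ n, ∀ (a b : α) (k w : Bool),
    AssimN (mrEdges A B PA PB Eg) C n (mX1 a b k w) →
    (∃ w', mX1 a b k w' ∈ C) ∨
      (∃ m < n, AssimN (mrEdges A B PA PB Eg) C m (mV a) ∧
        AssimN (mrEdges A B PA PB Eg) C m (mV b)) := by
  intro n
  induction n using Nat.strong_induction_on with
  | _ n ih =>
    intro a b k w h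
    match n, h with
    | 0, h => exact Or.inl ⟨w, h⟩
    | (n+1), Or.inl h =>
      rcases ih n (Nat.lt_succ_self n) a b k w h with h1 | ⟨m, hm, h1⟩
      · exact Or.inl h1
      · exact Or.inr ⟨m, lt_trans hm (Nat.lt_succ_self n), h1⟩
    | (n+1), Or.inr ⟨e, he, hxe, hall⟩ =>
      rcases edges_mX1 he hxe with ⟨hq, hpex, h⟩ | ⟨hq, p, hp, h1, h2, h⟩
      · subst h
        refine Or.inr ⟨n, Nat.lt_succ_self n, ?_, ?_⟩
        · exact hall (mV a) (by simp) (by simp)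
        · exact hall (mV b) (by simp) (by simp)
      · subst h
        have hX1' : AssimN (mrEdges A B PA PB Eg) C n (mX1 a b k (!w)) := by
          refine hall (mX1 a b k (!w)) (by cases w <;> simp) (by cases w <;> simp)
        rcases ih n (Nat.lt_succ_self n) a b k (!w) hX1' with h1 | ⟨m, hm, h1⟩
        · exact Or.inl h1
        · exact Or.inr ⟨m, lt_trans hm (Nat.lt_succ_self n), h1⟩

include hustar_ee hustar_not in
/-- Inversion for `mE` vertices at low levels. -/
lemma Elow : ∀ n ≤ nstar, ∀ p ∈ superEdges PA PB Eg, ∀ k : Bool,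
    AssimN (mrEdges A B PA PB Eg) C n (mE p.1 p.2 k) →
    mE p.1 p.2 k ∈ C ∨
    (∃ q ∈ Eg, q.1 ∈ p.1 ∧ q.2 ∈ p.2 ∧ ∃ w', mX1 q.1 q.2 k w' ∈ C) ∨
    (∃ q ∈ Eg, q.1 ∈ p.1 ∧ q.2 ∈ p.2 ∧
      EarlyV A B PA PB Eg C nstar q.1 ∧ EarlyV A B PA PB Eg C nstar q.2) ∨
    (∃ m < n, (∀ u ∈ eeVerts PA PB Eg, u ≠ mE p.1 p.2 k →
        AssimN (mrEdges A B PA PB Eg) C m u) ∧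
      ∃ v w, v ∈ A ∪ B ∧ AssimN (mrEdges A B PA PB Eg) C m (mX2 v w)) := by
  intro n
  induction n using Nat.strong_induction_on with
  | _ n ih =>
    intro hn p hp k h
    match n, h with
    | 0, h => exact Or.inl h
    | (n+1), Or.inl h =>
      rcases ih n (Nat.lt_succ_self n) (le_trans (Nat.le_succ n) hn) p hp k h with
        h1 | h1 | h1 | ⟨m, hm, h1⟩
      · exact Or.inl h1
      · exact Or.inr (Or.inl h1)
      · exact Or.inr (Or.inr (Or.inl h1))
      · exact Or.inr (Or.inr (Or.inr ⟨m, lt_trans hm (Nat.lt_succ_self n), h1⟩))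
    | (n+1), Or.inr ⟨e, he, hxe, hall⟩ =>
      rcases edges_mE he hxe with ⟨hpSE, q, hq, h1, h2, h⟩ | ⟨v, hv, w, h⟩
      · subst h
        have hX1f : AssimN (mrEdges A B PA PB Eg) C n (mX1 q.1 q.2 k false) := by
          refine hall _ (by simp) (by simp)
        rcases X1pair n q.1 q.2 k false hX1f with h3 | ⟨m, hm, hma, hmb⟩
        · exact Or.inr (Or.inl ⟨q, hq, h1, h2, h3⟩)
        · have hmlt : m < nstar := lt_of_lt_of_le (lt_trans hm (Nat.lt_succ_self n)) hn
          exact Or.inr (Or.inr (Or.inl ⟨q, hq, h1, h2,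
            Or.inr ⟨m, hmlt, hma⟩, Or.inr ⟨m, hmlt, hmb⟩⟩))
      · subst h
        refine Or.inr (Or.inr (Or.inr ⟨n, Nat.lt_succ_self n, ?_, v, w, hv, ?_⟩))
        · intro u hu hne
          exact hall u (Finset.mem_insert_of_mem hu) hne
        · exact hall (mX2 v w) (Finset.mem_insert_self _ _) (by simp)

end Hard

end MinrepAux5

namespace MinrepAux6
open MinrepAux MinrepAux2 MinrepAux3 MinrepAux5

/-- Specification of the charging map for early `A ∪ B` vertices. -/
def PhiSpec (A B : Finset α) (PA PB : Finset (Finset α)) (Eg : Finset (α × α))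
    (C : Finset (MRVert α)) (v : α) (c : MRVert α) : Prop :=
  c = mV v ∨
  (c = mX2 v false ∧ mX2 v true ∈ C) ∨
  (∃ a b : α, ∃ k w' : Bool, c = mX1 a b k w' ∧ (a, b) ∈ Eg ∧
    ((v = a ∧ ∃ m, m < hgt (mrEdges A B PA PB Eg) C (mV a) ∧
        AssimN (mrEdges A B PA PB Eg) C m (mV b)) ∨
     (v = b ∧ ∃ m, m < hgt (mrEdges A B PA PB Eg) C (mV b) ∧
        AssimN (mrEdges A B PA PB Eg) C m (mV a))))

/-- Specification of the spare core elements charged to an uncovered super-edge copy. -/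
def SpareSpec (Eg : Finset (α × α)) (C : Finset (MRVert α)) (ustar : MRVert α)
    (p : Finset α × Finset α) (k : Bool) (c : MRVert α) : Prop :=
  c = mE p.1 p.2 k ∨
  (∃ q, q ∈ Eg ∧ q.1 ∈ p.1 ∧ q.2 ∈ p.2 ∧ ∃ w', c = mX1 q.1 q.2 k w') ∨
  (∃ v w', c = mX2 v w' ∧ (w' = true ∨ mX2 v true ∉ C) ∧ ustar = mE p.1 p.2 k)

section Hard

variable {A B : Finset α} {PA PB : Finset (Finset α)} {Eg : Finset (α × α)}
  {C : Finset (MRVert α)} {nstar : ℕ} {ustar : MRVert α}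
  (hAB : Disjoint A B)
  (hEg : ∀ q ∈ Eg, q.1 ∈ A ∧ q.2 ∈ B)
  (hustar_ee : ustar ∈ eeVerts PA PB Eg)
  (hustar_not : ∀ m < nstar, ¬ AssimN (mrEdges A B PA PB Eg) C m ustar)

include hAB hEg hustar_ee hustar_not in
lemma PhiEx : ∀ n < nstar, ∀ v : α,
    AssimN (mrEdges A B PA PB Eg) C n (mV v) →
    ∃ c ∈ C, PhiSpec A B PA PB Eg C v c := by
  intro n
  induction n using Nat.strong_induction_on with
  | _ n ih =>
    intro hn v h
    have hg_le : hgt (mrEdges A B PA PB Eg) C (mV v) ≤ n := hgt_le h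
    rcases lt_or_eq_of_le hg_le with hg | hg
    · exact ih _ (hg) (lt_trans hg hn) v (assimN_hgt ⟨n, h⟩)
    · -- n is the minimal level of (mV v)
      match n, h, hn, hg with
      | 0, h, hn, hg => exact ⟨mV v, h, Or.inl rfl⟩
      | (n+1), Or.inl h, hn, hg =>
        exact absurd (hgt_le h) (by omega)
      | (n+1), Or.inr ⟨e, he, hxe, hall⟩, hn, hg =>
        rcases edges_mV he hxe with ⟨p, hp, q, hq, h1, h2, hv12, k, w, h⟩ | ⟨hvAB, h⟩
        · subst h
          have hq1B : q.1 ≠ q.2 := by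
            intro hcon
            exact Finset.disjoint_left.mp hAB ((hEg q hq).1) (hcon ▸ (hEg q hq).2)
          have hqpair : (q.1, q.2) ∈ Eg := by simpa using hq
          have hX1 : AssimN (mrEdges A B PA PB Eg) C n (mX1 q.1 q.2 k w) :=
            hall _ (by simp) (by simp)
          rcases X1pair n q.1 q.2 k w hX1 with ⟨w', hw'⟩ | ⟨m, hm, hma, hmb⟩
          · rcases hv12 with rfl | rfl
            · have hother : AssimN (mrEdges A B PA PB Eg) C n (mV q.2) :=
                hall _ (by simp) (by simp [Ne.symm hq1B])
              exact ⟨mX1 q.1 q.2 k w', hw', Or.inr (Or.inr ⟨q.1, q.2, k, w', rfl, hqpair,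
                Or.inl ⟨rfl, n, by omega, hother⟩⟩)⟩
            · have hother : AssimN (mrEdges A B PA PB Eg) C n (mV q.1) :=
                hall _ (by simp) (by simp [hq1B])
              exact ⟨mX1 q.1 q.2 k w', hw', Or.inr (Or.inr ⟨q.1, q.2, k, w', rfl, hqpair,
                Or.inr ⟨rfl, n, by omega, hother⟩⟩)⟩
          · -- both endpoints assimilated at level m < n: contradicts minimality
            exfalso
            rcases hv12 with rfl | rfl
            · exact absurd (hgt_le hma) (by omega)
            · exact absurd (hgt_le hmb) (by omega)
        · subst h
          have hf : AssimN (mrEdges A B PA PB Eg) C n (mX2 v false) :=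
            hall _ (by simp) (by simp)
          have ht : AssimN (mrEdges A B PA PB Eg) C n (mX2 v true) :=
            hall _ (by simp) (by simp)
          have hnn : n ≤ nstar := le_of_lt (lt_trans (Nat.lt_succ_self n) hn)
          have hCf := X2low hustar_ee hustar_not n hnn v false hf
          have hCt := X2low hustar_ee hustar_not n hnn v true ht
          rcases hCf.2 with hcf | ⟨m, hm, hmv⟩
          · rcases hCt.2 with hct | ⟨m, hm, hmv⟩
            · exact ⟨mX2 v false, hcf, Or.inr (Or.inl ⟨rfl, hct⟩)⟩
            · exact absurd (hgt_le hmv) (by omega)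
          · exact absurd (hgt_le hmv) (by omega)

include hustar_ee hustar_not in
lemma SpareEx (hcore : IsCore (mrVerts A B PA PB Eg) (mrEdges A B PA PB Eg) C)
    (hle_nstar : ∀ u ∈ eeVerts PA PB Eg, hgt (mrEdges A B PA PB Eg) C u ≤ nstar) :
    ∀ p ∈ superEdges PA PB Eg, ∀ k : Bool,
    (∃ q ∈ Eg, q.1 ∈ p.1 ∧ q.2 ∈ p.2 ∧
      EarlyV A B PA PB Eg C nstar q.1 ∧ EarlyV A B PA PB Eg C nstar q.2) ∨
    ∃ c ∈ C, SpareSpec Eg C ustar p k c := by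
  intro p hp k
  obtain ⟨hp1, hp2, q, hq, h1, h2⟩ := (mem_superEdges PA PB Eg).mp hp
  have hedge := fl3_mem A B PA PB Eg hp hq h1 h2 k
  have hassim : Assim (mrEdges A B PA PB Eg) C (mE p.1 p.2 k) :=
    hcore.2 _ hedge _ (by simp)
  have hex := assim_exists hassim
  have hmemee : mE p.1 p.2 k ∈ eeVerts PA PB Eg :=
    (mem_eeVerts PA PB Eg).mpr ⟨p, hp, k, rfl⟩
  have hglee : hgt (mrEdges A B PA PB Eg) C (mE p.1 p.2 k) ≤ nstar := hle_nstar _ hmemee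
  rcases Elow hustar_ee hustar_not _ hglee p hp k (assimN_hgt hex) with
    h | ⟨q', hq', h1', h2', w', hw'⟩ | h | ⟨m, hm, hall, v, w, hvAB, hX2⟩
  · exact Or.inr ⟨mE p.1 p.2 k, h, Or.inl rfl⟩
  · exact Or.inr ⟨mX1 q'.1 q'.2 k w', hw', Or.inr (Or.inl ⟨q', hq', h1', h2', w', rfl⟩)⟩
  · exact Or.inl h
  · by_cases hus : ustar = mE p.1 p.2 k
    · have hmn : m ≤ nstar := le_of_lt (lt_of_lt_of_le hm hglee)
      obtain ⟨⟨w'', hw''⟩, -⟩ := X2low hustar_ee hustar_not m hmn v w hX2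
      by_cases hvt : mX2 v true ∈ C
      · exact Or.inr ⟨mX2 v true, hvt, Or.inr (Or.inr ⟨v, true, rfl, Or.inl rfl, hus⟩)⟩
      · have hw''f : w'' = false := by
          cases w'' with
          | true => exact absurd hw'' hvt
          | false => rfl
        rw [hw''f] at hw''
        exact Or.inr ⟨mX2 v false, hw'', Or.inr (Or.inr ⟨v, false, rfl, Or.inr hvt, hus⟩)⟩
    · exfalso
      have := hall ustar hustar_ee hus
      exact hustar_not m (lt_of_lt_of_le hm hglee) this

end Hard

section Uniq

variable {PA PB : Finset (Finset α)} {Eg : Finset (α × α)}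

lemma superedge_unique
    (hPAdisj : ∀ p ∈ PA, ∀ q ∈ PA, p ≠ q → Disjoint p q)
    (hPBdisj : ∀ p ∈ PB, ∀ q ∈ PB, p ≠ q → Disjoint p q)
    {p p' : Finset α × Finset α} {x y : α}
    (hp : p ∈ superEdges PA PB Eg) (hp' : p' ∈ superEdges PA PB Eg)
    (hx : x ∈ p.1) (hx' : x ∈ p'.1) (hy : y ∈ p.2) (hy' : y ∈ p'.2) : p = p' := by
  obtain ⟨h1, h2, -⟩ := (mem_superEdges PA PB Eg).mp hp
  obtain ⟨h1', h2', -⟩ := (mem_superEdges PA PB Eg).mp hp'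
  have e1 : p.1 = p'.1 := by
    by_contra hne
    exact Finset.disjoint_left.mp (hPAdisj _ h1 _ h1' hne) hx hx'
  have e2 : p.2 = p'.2 := by
    by_contra hne
    exact Finset.disjoint_left.mp (hPBdisj _ h2 _ h2' hne) hy hy'
  exact Prod.ext e1 e2

end Uniq

end MinrepAux6

namespace MinrepAux7
open MinrepAux MinrepAux2 MinrepAux3 MinrepAux5 MinrepAux6

section Inj

variable {A B : Finset α} {PA PB : Finset (Finset α)} {Eg : Finset (α × α)}
  {C : Finset (MRVert α)} {nstar : ℕ} {ustar : MRVert α}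

lemma PhiInj {v v' : α} {c : MRVert α}
    (h : PhiSpec A B PA PB Eg C v c) (h' : PhiSpec A B PA PB Eg C v' c) : v = v' := by
  rcases h with rfl | ⟨rfl, hC⟩ | ⟨a, b, k, w, rfl, hab, hd⟩
  · rcases h' with h' | ⟨h', -⟩ | ⟨a, b, k, w, h', -, -⟩
    · exact (by simpa using h'.symm : v' = v).symm
    · simp at h'
    · simp at h'
  · rcases h' with h' | ⟨h', -⟩ | ⟨a, b, k, w, h', -, -⟩
    · simp at h'
    · exact (by simpa using (h'.symm : mX2 v' false = mX2 v false) : v' = v).symm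
    · simp at h'
  · rcases h' with h' | ⟨h', -⟩ | ⟨a', b', k', w', h', -, hd'⟩
    · simp at h'
    · simp at h'
    · have heq : a' = a ∧ b' = b ∧ k' = k ∧ w' = w := by simpa using h'.symm
      obtain ⟨rfl, rfl, rfl, rfl⟩ := heq
      rcases hd with ⟨rfl, m, hm, hAs⟩ | ⟨rfl, m, hm, hAs⟩ <;>
        rcases hd' with ⟨rfl, m', hm', hAs'⟩ | ⟨rfl, m', hm', hAs'⟩
      · rfl
      · exfalso
        have g1 := hgt_le hAs
        have g2 := hgt_le hAs'
        omega
      · exfalso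
        have g1 := hgt_le hAs
        have g2 := hgt_le hAs'
        omega
      · rfl

lemma SpInj
    (hPAdisj : ∀ p ∈ PA, ∀ q ∈ PA, p ≠ q → Disjoint p q)
    (hPBdisj : ∀ p ∈ PB, ∀ q ∈ PB, p ≠ q → Disjoint p q)
    {p p' : Finset α × Finset α} {k k' : Bool} {c : MRVert α}
    (hp : p ∈ superEdges PA PB Eg) (hp' : p' ∈ superEdges PA PB Eg)
    (h : SpareSpec Eg C ustar p k c) (h' : SpareSpec Eg C ustar p' k' c) :
    p = p' ∧ k = k' := by
  rcases h with rfl | ⟨q, hq, h1, h2, w, rfl⟩ | ⟨v, w, rfl, hw, hus⟩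
  · rcases h' with h' | ⟨q', hq', h1', h2', w', h'⟩ | ⟨v, w, h', -, -⟩
    · have : p'.1 = p.1 ∧ p'.2 = p.2 ∧ k' = k := by simpa using h'.symm
      exact ⟨(Prod.ext this.1 this.2.1).symm, this.2.2.symm⟩
    · simp at h'
    · simp at h'
  · rcases h' with h' | ⟨q', hq', h1', h2', w', h'⟩ | ⟨v, w', h', -, -⟩
    · simp at h'
    · have heq : q'.1 = q.1 ∧ q'.2 = q.2 ∧ k' = k ∧ w' = w := by simpa using h'.symm
      refine ⟨(superedge_unique hPAdisj hPBdisj hp hp'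
        h1 (heq.1 ▸ h1') h2 (heq.2.1 ▸ h2')), heq.2.2.1.symm⟩
    · simp at h'
  · rcases h' with h' | ⟨q', hq', h1', h2', w', h'⟩ | ⟨v', w'', h', -, hus'⟩
    · simp at h'
    · simp at h'
    · rw [hus] at hus'
      have : p'.1 = p.1 ∧ p'.2 = p.2 ∧ k' = k := by simpa using hus'.symm
      exact ⟨(Prod.ext this.1 this.2.1).symm, this.2.2.symm⟩

/-- A spare element of an super-edge uncovered by early vertices can never coincide
with a charging target of an early vertex. -/
lemma PhiSpare {v : α} {c : MRVert α} {p : Finset α × Finset α} {k : Bool}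
    (hEv : EarlyV A B PA PB Eg C nstar v)
    (h : PhiSpec A B PA PB Eg C v c)
    (h' : SpareSpec Eg C ustar p k c) :
    ∃ q ∈ Eg, q.1 ∈ p.1 ∧ q.2 ∈ p.2 ∧
      EarlyV A B PA PB Eg C nstar q.1 ∧ EarlyV A B PA PB Eg C nstar q.2 := by
  rcases h' with rfl | ⟨q, hq, h1, h2, w, rfl⟩ | ⟨u, w, rfl, hw, hus⟩
  · exfalso
    rcases h with h | ⟨h, -⟩ | ⟨a, b, kk, ww, h, -, -⟩ <;> simp at h
  · rcases h with h | ⟨h, -⟩ | ⟨a, b, kk, ww, h, hab, hd⟩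
    · simp at h
    · simp at h
    · have heq : q.1 = a ∧ q.2 = b ∧ k = kk ∧ w = ww := by simpa using h
      obtain ⟨e1, e2, rfl, rfl⟩ := heq
      rw [← e1, ← e2] at hab hd
      refine ⟨q, hq, h1, h2, ?_⟩
      rcases hd with ⟨rfl, m, hm, hAs⟩ | ⟨rfl, m, hm, hAs⟩
      · -- v = q.1 is early; q.2 assimilated at m < hgt (mV q.1)
        have hmn : m < nstar := by
          rcases hEv with hEv | ⟨m'', hm'', hAs''⟩
          · have : hgt (mrEdges A B PA PB Eg) C (mV q.1) = 0 :=
              Nat.le_zero.mp (hgt_le (hEv : AssimN (mrEdges A B PA PB Eg) C 0 (mV q.1)))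
            omega
          · have := hgt_le hAs''
            omega
        exact ⟨hEv, Or.inr ⟨m, hmn, hAs⟩⟩
      · have hmn : m < nstar := by
          rcases hEv with hEv | ⟨m'', hm'', hAs''⟩
          · have : hgt (mrEdges A B PA PB Eg) C (mV q.2) = 0 :=
              Nat.le_zero.mp (hgt_le (hEv : AssimN (mrEdges A B PA PB Eg) C 0 (mV q.2)))
            omega
          · have := hgt_le hAs''
            omega
        exact ⟨Or.inr ⟨m, hmn, hAs⟩, hEv⟩
  · exfalso
    rcases h with h | ⟨h, hC⟩ | ⟨a, b, kk, ww, h, -, -⟩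
    · simp at h
    · have huv : v = u ∧ w = false := by simpa using h.symm
      obtain ⟨rfl, rfl⟩ := huv
      rcases hw with hw | hw
      · simp at hw
      · exact hw hC
    · simp at h

end Inj

end MinrepAux7

namespace MinrepAux8
open MinrepAux MinrepAux2 MinrepAux3 MinrepAux5 MinrepAux6 MinrepAux7

lemma core_to_sol {A B : Finset α} {PA PB : Finset (Finset α)} {Eg : Finset (α × α)}
    (hAB : Disjoint A B)
    (hPAdisj : ∀ p ∈ PA, ∀ q ∈ PA, p ≠ q → Disjoint p q)
    (hPBdisj : ∀ p ∈ PB, ∀ q ∈ PB, p ≠ q → Disjoint p q)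
    (hEg : ∀ q ∈ Eg, q.1 ∈ A ∧ q.2 ∈ B)
    {C : Finset (MRVert α)}
    (hcore : IsCore (mrVerts A B PA PB Eg) (mrEdges A B PA PB Eg) C) :
    ∃ S : Finset α, S ⊆ A ∪ B ∧
      (∀ p ∈ superEdges PA PB Eg,
        ∃ q ∈ Eg, q.1 ∈ S ∧ q.1 ∈ p.1 ∧ q.2 ∈ S ∧ q.2 ∈ p.2) ∧
      S.card ≤ C.card := by
  classical
  by_cases hSE : superEdges PA PB Eg = ∅
  · refine ⟨∅, Finset.empty_subset _, ?_, Nat.zero_le _⟩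
    intro p hp
    rw [hSE] at hp
    exact absurd hp (Finset.notMem_empty p)
  · obtain ⟨p0, hp0⟩ := Finset.nonempty_of_ne_empty hSE
    obtain ⟨-, -, q0, hq0, -, -⟩ := (mem_superEdges PA PB Eg).mp hp0
    have hene : (eeVerts PA PB Eg).Nonempty :=
      ⟨mE p0.1 p0.2 false, (mem_eeVerts PA PB Eg).mpr ⟨p0, hp0, false, rfl⟩⟩
    set H : MRVert α → ℕ := hgt (mrEdges A B PA PB Eg) C with hH
    set nstar := (eeVerts PA PB Eg).sup H with hnstar
    obtain ⟨ustar, hu_mem, hu_eq⟩ := Finset.exists_mem_eq_sup _ hene H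
    have hustar_not : ∀ m < nstar, ¬ AssimN (mrEdges A B PA PB Eg) C m ustar := by
      intro m hm hAs
      have := hgt_le hAs
      rw [← hH] at this
      omega
    have hle_nstar : ∀ u ∈ eeVerts PA PB Eg,
        hgt (mrEdges A B PA PB Eg) C u ≤ nstar := by
      intro u hu
      rw [← hH]
      exact Finset.le_sup hu
    set W := (A ∪ B).filter (fun v => EarlyV A B PA PB Eg C nstar v) with hW
    set U := (superEdges PA PB Eg).filter
      (fun p => ¬ ∃ q ∈ Eg, q.1 ∈ p.1 ∧ q.2 ∈ p.2 ∧ q.1 ∈ W ∧ q.2 ∈ W) with hU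
    -- the charging map for early vertices
    have hφex : ∀ v : α, ∃ c : MRVert α,
        v ∈ W → c ∈ C ∧ PhiSpec A B PA PB Eg C v c := by
      intro v
      by_cases hv : v ∈ W
      · obtain ⟨-, hEv⟩ := Finset.mem_filter.mp hv
        rcases hEv with hc | ⟨m, hm, hAs⟩
        · exact ⟨mV v, fun _ => ⟨hc, Or.inl rfl⟩⟩
        · obtain ⟨c, hc1, hc2⟩ := PhiEx hAB hEg hu_mem hustar_not m hm v hAs
          exact ⟨c, fun _ => ⟨hc1, hc2⟩⟩
      · exact ⟨mV v, fun h => absurd h hv⟩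
    choose φ hφ using hφex
    -- the spare elements for uncovered super-edges
    have hspex : ∀ (p : Finset α × Finset α) (k : Bool), ∃ c : MRVert α,
        p ∈ U → c ∈ C ∧ SpareSpec Eg C ustar p k c := by
      intro p k
      by_cases hp : p ∈ U
      · obtain ⟨hpSE, hnc⟩ := Finset.mem_filter.mp hp
        rcases SpareEx hu_mem hustar_not hcore hle_nstar p hpSE k with
          ⟨q, hq, h1, h2, E1, E2⟩ | ⟨c, hc1, hc2⟩
        · exfalso
          refine hnc ⟨q, hq, h1, h2, ?_, ?_⟩
          · exact Finset.mem_filter.mpr ⟨Finset.mem_union_left _ (hEg q hq).1, E1⟩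
          · exact Finset.mem_filter.mpr ⟨Finset.mem_union_right _ (hEg q hq).2, E2⟩
        · exact ⟨c, fun _ => ⟨hc1, hc2⟩⟩
      · exact ⟨ustar, fun h => absurd h hp⟩
    choose sp hsp using hspex
    -- cover choices
    have hcovex : ∀ p : Finset α × Finset α, ∃ q : α × α,
        p ∈ superEdges PA PB Eg → q ∈ Eg ∧ q.1 ∈ p.1 ∧ q.2 ∈ p.2 := by
      intro p
      by_cases hp : p ∈ superEdges PA PB Eg
      · obtain ⟨-, -, q, hq, h1, h2⟩ := (mem_superEdges PA PB Eg).mp hp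
        exact ⟨q, fun _ => ⟨hq, h1, h2⟩⟩
      · exact ⟨q0, fun h => absurd h hp⟩
    choose cov hcov using hcovex
    set S := W ∪ U.biUnion (fun p => {(cov p).1, (cov p).2}) with hS
    have hUsub : U ⊆ superEdges PA PB Eg := Finset.filter_subset _ _
    refine ⟨S, ?_, ?_, ?_⟩
    · -- S ⊆ A ∪ B
      intro x hx
      rcases Finset.mem_union.mp hx with hx | hx
      · exact (Finset.filter_subset _ _) hx
      · obtain ⟨p, hpU, hxp⟩ := Finset.mem_biUnion.mp hx
        have hc := hcov p (hUsub hpU)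
        rcases Finset.mem_insert.mp hxp with rfl | hxp
        · exact Finset.mem_union_left _ (hEg _ hc.1).1
        · rw [Finset.mem_singleton] at hxp
          subst hxp
          exact Finset.mem_union_right _ (hEg _ hc.1).2
    · -- coverage
      intro p hp
      by_cases hpU : p ∈ U
      · have hc := hcov p hp
        refine ⟨cov p, hc.1, ?_, hc.2.1, ?_, hc.2.2⟩
        · exact Finset.mem_union_right _ (Finset.mem_biUnion.mpr
            ⟨p, hpU, Finset.mem_insert_self _ _⟩)
        · exact Finset.mem_union_right _ (Finset.mem_biUnion.mpr
            ⟨p, hpU, Finset.mem_insert_of_mem (Finset.mem_singleton_self _)⟩)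
      · have : ¬ ¬ ∃ q ∈ Eg, q.1 ∈ p.1 ∧ q.2 ∈ p.2 ∧ q.1 ∈ W ∧ q.2 ∈ W := by
          intro hnc
          exact hpU (Finset.mem_filter.mpr ⟨hp, hnc⟩)
        obtain ⟨q, hq, h1, h2, hW1, hW2⟩ := not_not.mp this
        exact ⟨q, hq, Finset.mem_union_left _ hW1, h1, Finset.mem_union_left _ hW2, h2⟩
    · -- cardinality
      have hStep1 : S.card ≤ W.card + 2 * U.card := by
        refine le_trans (Finset.card_union_le _ _) ?_
        have : (U.biUnion (fun p => {(cov p).1, (cov p).2})).card ≤ 2 * U.card := by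
          refine le_trans Finset.card_biUnion_le ?_
          calc ∑ p ∈ U, ({(cov p).1, (cov p).2} : Finset α).card
              ≤ ∑ _p ∈ U, 2 := Finset.sum_le_sum (fun p _ =>
                le_trans (Finset.card_insert_le _ _) (by simp))
            _ = 2 * U.card := by rw [Finset.sum_const, smul_eq_mul, mul_comm]
        omega
      have hStep2 : W.card + 2 * U.card ≤ C.card := by
        set Φ := W.image φ with hΦ
        set Sp := U.biUnion (fun p => {sp p false, sp p true}) with hSp
        have hΦcard : Φ.card = W.card := by
          refine Finset.card_image_of_injOn ?_
          intro v hv v' hv' heq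
          exact PhiInj (hφ v hv).2 (heq ▸ (hφ v' hv').2)
        have hSpDisjPair : ∀ p ∈ U, ∀ p' ∈ U, p ≠ p' →
            Disjoint ({sp p false, sp p true} : Finset (MRVert α))
              ({sp p' false, sp p' true} : Finset (MRVert α)) := by
          intro p hpU p' hpU' hne
          rw [Finset.disjoint_left]
          intro c hc hc'
          have hk : ∃ k, c = sp p k := by
            rcases Finset.mem_insert.mp hc with h | h
            · exact ⟨false, h⟩
            · exact ⟨true, Finset.mem_singleton.mp h⟩
          have hk' : ∃ k', c = sp p' k' := by
            rcases Finset.mem_insert.mp hc' with h | h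
            · exact ⟨false, h⟩
            · exact ⟨true, Finset.mem_singleton.mp h⟩
          obtain ⟨k, rfl⟩ := hk
          obtain ⟨k', he'⟩ := hk'
          exact hne (SpInj hPAdisj hPBdisj (hUsub hpU) (hUsub hpU')
            (hsp p k hpU).2 (he' ▸ (hsp p' k' hpU').2)).1
        have hSpPairCard : ∀ p ∈ U,
            ({sp p false, sp p true} : Finset (MRVert α)).card = 2 := by
          intro p hpU
          rw [Finset.card_insert_of_notMem, Finset.card_singleton]
          rw [Finset.mem_singleton]
          intro heq
          have := (SpInj hPAdisj hPBdisj (hUsub hpU) (hUsub hpU)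
            (hsp p false hpU).2 (heq ▸ (hsp p true hpU).2)).2
          simp at this
        have hSpcard : Sp.card = 2 * U.card := by
          rw [hSp, Finset.card_biUnion hSpDisjPair]
          rw [Finset.sum_congr rfl hSpPairCard, Finset.sum_const, smul_eq_mul, mul_comm]
        have hsub : Φ ∪ Sp ⊆ C := by
          intro c hc
          rcases Finset.mem_union.mp hc with hc | hc
          · obtain ⟨v, hv, rfl⟩ := Finset.mem_image.mp hc
            exact (hφ v hv).1
          · obtain ⟨p, hpU, hcp⟩ := Finset.mem_biUnion.mp hc
            rcases Finset.mem_insert.mp hcp with rfl | hcp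
            · exact (hsp p false hpU).1
            · rw [Finset.mem_singleton] at hcp
              subst hcp
              exact (hsp p true hpU).1
        have hdisj : Disjoint Φ Sp := by
          rw [Finset.disjoint_left]
          intro c hc hc'
          obtain ⟨v, hv, rfl⟩ := Finset.mem_image.mp hc
          obtain ⟨p, hpU, hcp⟩ := Finset.mem_biUnion.mp hc'
          have hk : ∃ k, φ v = sp p k := by
            rcases Finset.mem_insert.mp hcp with h | h
            · exact ⟨false, h⟩
            · exact ⟨true, Finset.mem_singleton.mp h⟩
          obtain ⟨k, hkeq⟩ := hk
          obtain ⟨hvAB, hEv⟩ := Finset.mem_filter.mp hv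
          obtain ⟨q, hq, h1, h2, E1, E2⟩ :=
            PhiSpare hEv (hφ v hv).2 (hkeq ▸ (hsp p k hpU).2)
          obtain ⟨-, hnc⟩ := Finset.mem_filter.mp hpU
          refine hnc ⟨q, hq, h1, h2, ?_, ?_⟩
          · exact Finset.mem_filter.mpr ⟨Finset.mem_union_left _ (hEg q hq).1, E1⟩
          · exact Finset.mem_filter.mpr ⟨Finset.mem_union_right _ (hEg q hq).2, E2⟩
        have := Finset.card_union_of_disjoint hdisj
        have hle := Finset.card_le_card hsub
        omega
      omega

end MinrepAux8

open MinrepAux MinrepAux2 MinrepAux3 MinrepAux4 MinrepAux5 MinrepAux6 MinrepAux7 MinrepAux8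

/-- Theorem 9: for a MINREP instance `M = (A, B, E)` (with
partitions `PA` of `A` into parts of size `mA` and `PB` of `B` into parts of size `mB`)
and the hypergraph `H` constructed from it, the minimum core size of `H` equals the
minimum cardinality `|A' ∪ B'|` of a MINREP solution of `M`, i.e. of sets `A' ⊆ A`,
`B' ⊆ B` such that every super-edge is covered by some `ab ∈ E` with
`a ∈ A'`, `b ∈ B'`. -/
theorem minrep_minCoreSize
    (A B : Finset α) (hAB : Disjoint A B)
    (PA PB : Finset (Finset α)) (mA mB : ℕ)
    (hPAunion : PA.biUnion id = A)
    (hPAdisj : ∀ p ∈ PA, ∀ q ∈ PA, p ≠ q → Disjoint p q)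
    (hPAcard : ∀ p ∈ PA, p.card = mA)
    (hPBunion : PB.biUnion id = B)
    (hPBdisj : ∀ p ∈ PB, ∀ q ∈ PB, p ≠ q → Disjoint p q)
    (hPBcard : ∀ p ∈ PB, p.card = mB)
    (Eg : Finset (α × α)) (hEg : ∀ q ∈ Eg, q.1 ∈ A ∧ q.2 ∈ B) :
    minCoreSize (mrVerts A B PA PB Eg) (mrEdges A B PA PB Eg) =
      sInf {k | ∃ A' ⊆ A, ∃ B' ⊆ B,
        (∀ p ∈ superEdges PA PB Eg,
          ∃ q ∈ Eg, q.1 ∈ A' ∧ q.1 ∈ p.1 ∧ q.2 ∈ B' ∧ q.2 ∈ p.2) ∧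
        (A' ∪ B').card = k} := by
  classical
  set SL : Set ℕ := {k | ∃ C, IsCore (mrVerts A B PA PB Eg) (mrEdges A B PA PB Eg) C ∧
    C.card = k} with hSL
  set SR : Set ℕ := {k | ∃ A' ⊆ A, ∃ B' ⊆ B,
      (∀ p ∈ superEdges PA PB Eg,
        ∃ q ∈ Eg, q.1 ∈ A' ∧ q.1 ∈ p.1 ∧ q.2 ∈ B' ∧ q.2 ∈ p.2) ∧
      (A' ∪ B').card = k} with hSR
  have hRne : SR.Nonempty := by
    refine ⟨(A ∪ B).card, A, subset_rfl, B, subset_rfl, ?_, rfl⟩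
    intro p hp
    obtain ⟨-, -, q, hq, h1, h2⟩ := (mem_superEdges PA PB Eg).mp hp
    exact ⟨q, hq, (hEg q hq).1, h1, (hEg q hq).2, h2⟩
  have hRL : ∀ k ∈ SR, k ∈ SL := by
    intro k hk
    obtain ⟨A', hA', B', hB', hcov, hcard⟩ := hk
    refine ⟨(A' ∪ B').image mV, sol_isCore hEg hA' hB' hcov, ?_⟩
    rw [Finset.card_image_of_injective _ mV_injective, hcard]
  have hLR : ∀ k ∈ SL, ∃ k' ∈ SR, k' ≤ k := by
    intro k hk
    obtain ⟨C, hcore, rfl⟩ := hk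
    obtain ⟨S, hsub, hcov, hcard⟩ := core_to_sol hAB hPAdisj hPBdisj hEg hcore
    refine ⟨S.card, ⟨S ∩ A, Finset.inter_subset_right, S ∩ B, Finset.inter_subset_right,
      ?_, ?_⟩, hcard⟩
    · intro p hp
      obtain ⟨q, hq, hS1, h1, hS2, h2⟩ := hcov p hp
      exact ⟨q, hq, Finset.mem_inter.mpr ⟨hS1, (hEg q hq).1⟩, h1,
        Finset.mem_inter.mpr ⟨hS2, (hEg q hq).2⟩, h2⟩
    · rw [← Finset.inter_union_distrib_left, Finset.inter_eq_left.mpr hsub]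
  have hEq : minCoreSize (mrVerts A B PA PB Eg) (mrEdges A B PA PB Eg) = sInf SL := rfl
  rw [hEq]
  apply le_antisymm
  · exact Nat.sInf_le (hRL _ (Nat.sInf_mem hRne))
  · have hLne : SL.Nonempty := ⟨_, hRL _ (Nat.sInf_mem hRne)⟩
    obtain ⟨k', hk'R, hk'le⟩ := hLR _ (Nat.sInf_mem hLne)
    exact le_trans (Nat.sInf_le hk'R) hk'le

end MINREP
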